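/- Lemma (summation-by-parts counting bound, inverse 4/3 rate). Let q ≥ 1 be an integer, let v_1 ≥ v_2 ≥ … ≥ v_q > 0 be reals, and let C > 0. Then ⌊C/v_q^{4/3}⌋·v_q + Σ_{p=1}^{q−1} ⌊C/v_p^{4/3}⌋·(v_p − v_{p+1}) ≤ 4C / v_q^{1/3}. -/

import Mathlib

open Finset

lemma aux_pointwise (a b : ℝ) (hb : 0 < b) (hab : b ≤ a) :
    (a - b) / a ^ ((4:ℝ)/3) ≤ 3 * (1 / b ^ ((1:ℝ)/3) - 1 / a ^ ((1:ℝ)/3)) := by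
  have ha : 0 < a := hb.trans_le hab
  set x := a ^ ((1:ℝ)/3) with hxdef
  set y := b ^ ((1:ℝ)/3) with hydef
  have hx : 0 < x := Real.rpow_pos_of_pos ha _
  have hy : 0 < y := Real.rpow_pos_of_pos hb _
  have hyx : y ≤ x := Real.rpow_le_rpow hb.le hab (by norm_num)
  have hax : a = x ^ 3 := by
    rw [hxdef, ← Real.rpow_natCast (a ^ ((1:ℝ)/3)) 3, ← Real.rpow_mul ha.le]
    norm_num
  have hby : b = y ^ 3 := by
    rw [hydef, ← Real.rpow_natCast (b ^ ((1:ℝ)/3)) 3, ← Real.rpow_mul hb.le]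
    norm_num
  have ha4 : a ^ ((4:ℝ)/3) = x ^ 4 := by
    rw [hxdef, ← Real.rpow_natCast (a ^ ((1:ℝ)/3)) 4, ← Real.rpow_mul ha.le]
    norm_num
  rw [ha4, hax, hby]
  rw [div_le_iff₀ (by positivity)]
  have key : (x^3 - y^3) * (x * y) ≤ 3 * (x - y) * x ^ 4 := by
    nlinarith [mul_nonneg (mul_nonneg hx.le (sq_nonneg (x - y)))
      (by positivity : (0:ℝ) ≤ 3*x^2 + 2*x*y + y^2), hx, hy, mul_pos hx hy]
  have h1 : 3 * (1 / y - 1 / x) = 3 * (x - y) / (x * y) := by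
    field_simp
  rw [h1, div_mul_eq_mul_div, le_div_iff₀ (by positivity)]
  nlinarith [key]

lemma aux_tele (v : ℕ → ℝ) : ∀ n : ℕ,
    (∀ p, 1 ≤ p → p ≤ n → v (p+1) ≤ v p) →
    (∀ p, 1 ≤ p → p ≤ n+1 → 0 < v p) →
    ∑ p ∈ Finset.Icc 1 n, (v p - v (p+1)) / (v p) ^ ((4:ℝ)/3)
      ≤ 3 * (1 / (v (n+1)) ^ ((1:ℝ)/3) - 1 / (v 1) ^ ((1:ℝ)/3)) := by
  intro n
  induction n with
  | zero => intro _ _; simp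
  | succ n ih =>
    intro hmono hpos
    rw [Finset.sum_Icc_succ_top (by omega : 1 ≤ n + 1)]
    have h1 : ∑ p ∈ Finset.Icc 1 n, (v p - v (p+1)) / (v p) ^ ((4:ℝ)/3)
        ≤ 3 * (1 / (v (n+1)) ^ ((1:ℝ)/3) - 1 / (v 1) ^ ((1:ℝ)/3)) :=
      ih (fun p h1 h2 => hmono p h1 (by omega)) (fun p h1 h2 => hpos p h1 (by omega))
    have h2 : (v (n+1) - v (n+2)) / (v (n+1)) ^ ((4:ℝ)/3)
        ≤ 3 * (1 / (v (n+2)) ^ ((1:ℝ)/3) - 1 / (v (n+1)) ^ ((1:ℝ)/3)) :=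
      aux_pointwise _ _ (hpos (n+2) (by omega) (by omega)) (hmono (n+1) (by omega) (by omega))
    linarith

/-- Lemma (summation-by-parts counting bound, inverse 4/3 rate):
for `v_1 ≥ … ≥ v_q > 0` and `C > 0`,
`⌊C/v_q^{4/3}⌋·v_q + Σ_{p=1}^{q−1} ⌊C/v_p^{4/3}⌋·(v_p − v_{p+1}) ≤ 4C/v_q^{1/3}`. -/
theorem counting_bound_inverse_four_thirds (q : ℕ) (hq : 1 ≤ q) (v : ℕ → ℝ)
    (hmono : ∀ p, 1 ≤ p → p < q → v (p+1) ≤ v p)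
    (hpos : ∀ p, 1 ≤ p → p ≤ q → 0 < v p)
    (C : ℝ) (hC : 0 < C) :
    (⌊C / (v q) ^ ((4:ℝ)/3)⌋ : ℝ) * v q
        + ∑ p ∈ Finset.Icc 1 (q-1), (⌊C / (v p) ^ ((4:ℝ)/3)⌋ : ℝ) * (v p - v (p+1))
      ≤ 4 * C / (v q) ^ ((1:ℝ)/3) := by
  obtain ⟨n, rfl⟩ : ∃ n, q = n + 1 := ⟨q - 1, by omega⟩
  have hvq : 0 < v (n+1) := hpos (n+1) (by omega) le_rfl
  have hv1 : 0 < v 1 := hpos 1 le_rfl (by omega)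
  -- first term
  have hterm1 : (⌊C / (v (n+1)) ^ ((4:ℝ)/3)⌋ : ℝ) * v (n+1)
      ≤ C / (v (n+1)) ^ ((1:ℝ)/3) := by
    have hfl : (⌊C / (v (n+1)) ^ ((4:ℝ)/3)⌋ : ℝ) ≤ C / (v (n+1)) ^ ((4:ℝ)/3) :=
      Int.floor_le _
    have h43 : (v (n+1)) ^ ((4:ℝ)/3) = v (n+1) * (v (n+1)) ^ ((1:ℝ)/3) := by
      rw [show (4:ℝ)/3 = 1 + 1/3 by norm_num, Real.rpow_add hvq, Real.rpow_one]
    calc (⌊C / (v (n+1)) ^ ((4:ℝ)/3)⌋ : ℝ) * v (n+1)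
        ≤ (C / (v (n+1)) ^ ((4:ℝ)/3)) * v (n+1) :=
          mul_le_mul_of_nonneg_right hfl hvq.le
      _ = C / (v (n+1)) ^ ((1:ℝ)/3) := by
          rw [h43]
          have h13 : (0:ℝ) < (v (n+1)) ^ ((1:ℝ)/3) := Real.rpow_pos_of_pos hvq _
          field_simp
  -- sum term
  have hsum : ∑ p ∈ Finset.Icc 1 ((n+1)-1), (⌊C / (v p) ^ ((4:ℝ)/3)⌋ : ℝ) * (v p - v (p+1))
      ≤ 3 * C / (v (n+1)) ^ ((1:ℝ)/3) := by
    have step1 : ∑ p ∈ Finset.Icc 1 n, (⌊C / (v p) ^ ((4:ℝ)/3)⌋ : ℝ) * (v p - v (p+1))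
        ≤ ∑ p ∈ Finset.Icc 1 n, C * ((v p - v (p+1)) / (v p) ^ ((4:ℝ)/3)) := by
      apply Finset.sum_le_sum
      intro p hp
      rw [Finset.mem_Icc] at hp
      have hvp : 0 < v p := hpos p hp.1 (by omega)
      have hmon : v (p+1) ≤ v p := hmono p hp.1 (by omega)
      have hfl : (⌊C / (v p) ^ ((4:ℝ)/3)⌋ : ℝ) ≤ C / (v p) ^ ((4:ℝ)/3) := Int.floor_le _
      calc (⌊C / (v p) ^ ((4:ℝ)/3)⌋ : ℝ) * (v p - v (p+1))
          ≤ (C / (v p) ^ ((4:ℝ)/3)) * (v p - v (p+1)) :=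
            mul_le_mul_of_nonneg_right hfl (by linarith)
        _ = C * ((v p - v (p+1)) / (v p) ^ ((4:ℝ)/3)) := by ring
    have step2 : ∑ p ∈ Finset.Icc 1 n, C * ((v p - v (p+1)) / (v p) ^ ((4:ℝ)/3))
        ≤ C * (3 * (1 / (v (n+1)) ^ ((1:ℝ)/3) - 1 / (v 1) ^ ((1:ℝ)/3))) := by
      rw [← Finset.mul_sum]
      exact mul_le_mul_of_nonneg_left
        (aux_tele v n (fun p h1 h2 => hmono p h1 (by omega))
          (fun p h1 h2 => hpos p h1 (by omega))) hC.le
    have hpos1 : 0 < (v 1) ^ ((1:ℝ)/3) := Real.rpow_pos_of_pos hv1 _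
    have hposq : 0 < (v (n+1)) ^ ((1:ℝ)/3) := Real.rpow_pos_of_pos hvq _
    have : C * (3 * (1 / (v (n+1)) ^ ((1:ℝ)/3) - 1 / (v 1) ^ ((1:ℝ)/3)))
        ≤ 3 * C / (v (n+1)) ^ ((1:ℝ)/3) := by
      have h1 : 0 < 1 / (v 1) ^ ((1:ℝ)/3) := by positivity
      have : C * (3 * (1 / (v (n+1)) ^ ((1:ℝ)/3))) = 3 * C / (v (n+1)) ^ ((1:ℝ)/3) := by
        ring
      nlinarith
    simp only [Nat.add_sub_cancel]
    linarith
  have : 4 * C / (v (n+1)) ^ ((1:ℝ)/3)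
      = C / (v (n+1)) ^ ((1:ℝ)/3) + 3 * C / (v (n+1)) ^ ((1:ℝ)/3) := by ring
  rw [this]
  exact add_le_add hterm1 hsum
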